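/- Let μ ≠ 0, t > 0, and (γ_r)_{r>0} positive with γ_r → 0 and r·γ_r → ∞. The family {r·γ_r·T_{μ√r,t} : r > 0} satisfies the LDP with speed 1/γ_r and good rate function J̃(b) = μ²b/2 for b ≥ 0, J̃(b) = ∞ for b < 0. -/

import Mathlib

open Real Filter MeasureTheory

/-- Extended-real logarithm of a probability value, sending `0` to `⊥`. -/
noncomputable def eLogProb (x : ENNReal) : EReal :=
  if x = 0 then ⊥ else ((Real.log x.toReal : ℝ) : EReal)

/-- The rate function `J̃(b) = μ²b/2` on `[0,∞)`, `∞` for `b < 0`. -/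
noncomputable def rateJtilde (μ b : ℝ) : EReal :=
  if 0 ≤ b then ((μ ^ 2 * b / 2 : ℝ) : EReal) else ⊤

lemma one_add_sq_pos (y : ℝ) : (0:ℝ) < 1 + y ^ 2 := by positivity

noncomputable def Ifun (c M : ℝ) : ℝ := ∫ y in (0:ℝ)..M, Real.exp (-(c * (1 + y ^ 2))) / (1 + y ^ 2)

lemma Ifun_cont (c : ℝ) : Continuous fun y : ℝ => Real.exp (-(c * (1 + y ^ 2))) / (1 + y ^ 2) := by
  apply Continuous.div (by continuity) (by continuity)
  intro y; positivity

lemma Ifun_nonneg (c M : ℝ) (hM : 0 ≤ M) : 0 ≤ Ifun c M :=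
  intervalIntegral.integral_nonneg hM (fun y _ => by positivity)

lemma Ifun_le (c M : ℝ) (hc : 0 ≤ c) (hM : 0 ≤ M) : Ifun c M ≤ Real.exp (-c) * (π / 2) := by
  have hcont2 : Continuous fun y : ℝ => Real.exp (-c) * (1 / (1 + y ^ 2)) := by
    apply Continuous.mul continuous_const
    apply Continuous.div continuous_const (by continuity)
    intro y; positivity
  have h1 : Ifun c M ≤ ∫ y in (0:ℝ)..M, Real.exp (-c) * (1 / (1 + y ^ 2)) := by
    apply intervalIntegral.integral_mono_on hM ((Ifun_cont c).intervalIntegrable 0 M)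
      (hcont2.intervalIntegrable 0 M)
    intro x hx
    rw [mul_one_div]
    apply div_le_div₀ (Real.exp_pos _).le _ (one_add_sq_pos x) le_rfl
    apply Real.exp_le_exp.2; nlinarith [sq_nonneg x]
  calc Ifun c M ≤ _ := h1
    _ = Real.exp (-c) * Real.arctan M := by
        rw [intervalIntegral.integral_const_mul, integral_one_div_one_add_sq, Real.arctan_zero, sub_zero]
    _ ≤ Real.exp (-c) * (π / 2) := by
        gcongr
        exact (Real.arctan_lt_pi_div_two M).le

lemma Ifun_ge (c ε M : ℝ) (hc : 0 ≤ c) (hε : 0 < ε) (hεM : ε ≤ M) :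
    ε * (Real.exp (-(c * (1 + ε ^ 2))) / (1 + ε ^ 2)) ≤ Ifun c M := by
  have hsplit : Ifun c M = Ifun c ε + ∫ y in ε..M, Real.exp (-(c * (1 + y ^ 2))) / (1 + y ^ 2) := by
    rw [Ifun, Ifun, intervalIntegral.integral_add_adjacent_intervals
      (((Ifun_cont c)).intervalIntegrable 0 ε) (((Ifun_cont c)).intervalIntegrable ε M)]
  have h2 : (0:ℝ) ≤ ∫ y in ε..M, Real.exp (-(c * (1 + y ^ 2))) / (1 + y ^ 2) :=
    intervalIntegral.integral_nonneg hεM (fun y _ => by positivity)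
  have h1 : ε * (Real.exp (-(c * (1 + ε ^ 2))) / (1 + ε ^ 2)) ≤ Ifun c ε := by
    have hpt : ∀ x ∈ Set.Icc (0:ℝ) ε,
        (fun _ : ℝ => Real.exp (-(c * (1 + ε ^ 2))) / (1 + ε ^ 2)) x ≤
          Real.exp (-(c * (1 + x ^ 2))) / (1 + x ^ 2) := by
      intro x hx
      have hx0 : 0 ≤ x := hx.1
      have hx1 : x ≤ ε := hx.2
      have hxx : x ^ 2 ≤ ε ^ 2 := by nlinarith
      exact div_le_div₀ (Real.exp_pos _).le (Real.exp_le_exp.2 (by nlinarith))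
        (one_add_sq_pos x) (by nlinarith)
    have hmono := intervalIntegral.integral_mono_on (μ := volume)
      (f := fun _ : ℝ => Real.exp (-(c * (1 + ε ^ 2))) / (1 + ε ^ 2))
      (g := fun y : ℝ => Real.exp (-(c * (1 + y ^ 2))) / (1 + y ^ 2))
      hε.le intervalIntegrable_const ((Ifun_cont c).intervalIntegrable 0 ε) hpt
    rw [intervalIntegral.integral_const] at hmono
    simpa [smul_eq_mul, Ifun] using hmono
  linarith

lemma tail_eq (μ t : ℝ) (ht : 0 < t)
    {Ω : Type*} [MeasurableSpace Ω] (P : Measure Ω) [IsProbabilityMeasure P]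
    (T : ℝ → Ω → ℝ) (hmeas : ∀ r, Measurable (T r))
    (hcdf : ∀ r > 0, ∀ a ∈ Set.Ioc 0 t,
      P {ω | T r ω ≤ a} = ENNReal.ofReal (1 - (2 / π) *
        ∫ y in (0:ℝ)..Real.sqrt ((t - a) / a),
          Real.exp (-((μ * Real.sqrt r) ^ 2 / 2) * a * (1 + y ^ 2)) / (1 + y ^ 2)))
    (b r g : ℝ) (hb : 0 < b) (hr : 0 < r) (hg : 0 < g) (hle : b / (r * g) ≤ t) :
    P {ω | b < r * g * T r ω} =
      ENNReal.ofReal ((2 / π) * Ifun (μ ^ 2 * b / (2 * g))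
        (Real.sqrt ((t - b / (r * g)) / (b / (r * g))))) := by
  set a := b / (r * g) with ha_def
  set c := μ ^ 2 * b / (2 * g) with hc_def
  set M := Real.sqrt ((t - a) / a) with hM_def
  have hrg : 0 < r * g := mul_pos hr hg
  have ha : 0 < a := div_pos hb hrg
  have hc : 0 ≤ c := by positivity
  have hM : 0 ≤ M := Real.sqrt_nonneg _
  have hset : {ω | b < r * g * T r ω} = {ω | T r ω ≤ a}ᶜ := by
    ext ω
    simp only [Set.mem_setOf_eq, Set.mem_compl_iff, not_le]
    rw [ha_def, div_lt_iff₀ hrg]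
    constructor <;> intro h <;> nlinarith
  have hA : MeasurableSet {ω | T r ω ≤ a} := (hmeas r) measurableSet_Iic
  have hint : (∫ y in (0:ℝ)..M,
      Real.exp (-((μ * Real.sqrt r) ^ 2 / 2) * a * (1 + y ^ 2)) / (1 + y ^ 2)) = Ifun c M := by
    rw [Ifun]
    apply intervalIntegral.integral_congr
    intro y _
    have hrr : Real.sqrt r ^ 2 = r := Real.sq_sqrt hr.le
    have hexp : -((μ * Real.sqrt r) ^ 2 / 2) * a * (1 + y ^ 2) = -(c * (1 + y ^ 2)) := by
      rw [mul_pow, hrr, ha_def, hc_def]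
      field_simp
    simp only [hexp]
  have hs1 : (2 / π) * Ifun c M ≤ 1 := by
    have h1 : Ifun c M ≤ Real.exp (-c) * (π / 2) := Ifun_le c M hc hM
    have h2 : Real.exp (-c) ≤ 1 := Real.exp_le_one_iff.2 (by linarith)
    have hπ := Real.pi_pos
    calc (2 / π) * Ifun c M ≤ (2 / π) * (1 * (π / 2)) := by
          apply mul_le_mul_of_nonneg_left _ (by positivity)
          calc Ifun c M ≤ Real.exp (-c) * (π / 2) := h1
            _ ≤ 1 * (π / 2) := by apply mul_le_mul_of_nonneg_right h2 (by positivity)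
      _ = 1 := by field_simp
  have hs0 : 0 ≤ (2 / π) * Ifun c M := by
    have := Ifun_nonneg c M hM
    have hπ := Real.pi_pos
    positivity
  rw [hset, prob_compl_eq_one_sub hA, hcdf r hr a ⟨ha, hle⟩, hint]
  rw [show (1:ENNReal) = ENNReal.ofReal 1 by simp,
    ← ENNReal.ofReal_sub _ (by linarith : (0:ℝ) ≤ 1 - (2 / π) * Ifun c M)]
  congr 1
  ring

lemma tail_le (μ t : ℝ) (ht : 0 < t)
    {Ω : Type*} [MeasurableSpace Ω] (P : Measure Ω) [IsProbabilityMeasure P]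
    (T : ℝ → Ω → ℝ) (hmeas : ∀ r, Measurable (T r))
    (hcdf : ∀ r > 0, ∀ a ∈ Set.Ioc 0 t,
      P {ω | T r ω ≤ a} = ENNReal.ofReal (1 - (2 / π) *
        ∫ y in (0:ℝ)..Real.sqrt ((t - a) / a),
          Real.exp (-((μ * Real.sqrt r) ^ 2 / 2) * a * (1 + y ^ 2)) / (1 + y ^ 2)))
    (b r g : ℝ) (hb : 0 < b) (hr : 0 < r) (hg : 0 < g) (hle : b / (r * g) ≤ t) :
    P {ω | b < r * g * T r ω} ≤ ENNReal.ofReal (Real.exp (-(μ ^ 2 * b / (2 * g)))) := by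
  rw [tail_eq μ t ht P T hmeas hcdf b r g hb hr hg hle]
  apply ENNReal.ofReal_le_ofReal
  set c := μ ^ 2 * b / (2 * g) with hc_def
  have hc : 0 ≤ c := by positivity
  have hπ := Real.pi_pos
  have h1 := Ifun_le c _ hc (Real.sqrt_nonneg ((t - b / (r * g)) / (b / (r * g))))
  calc (2 / π) * Ifun c _ ≤ (2 / π) * (Real.exp (-c) * (π / 2)) := by
        exact mul_le_mul_of_nonneg_left h1 (by positivity)
    _ = Real.exp (-c) := by field_simp

lemma tail_ge (μ t : ℝ) (ht : 0 < t)
    {Ω : Type*} [MeasurableSpace Ω] (P : Measure Ω) [IsProbabilityMeasure P]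
    (T : ℝ → Ω → ℝ) (hmeas : ∀ r, Measurable (T r))
    (hcdf : ∀ r > 0, ∀ a ∈ Set.Ioc 0 t,
      P {ω | T r ω ≤ a} = ENNReal.ofReal (1 - (2 / π) *
        ∫ y in (0:ℝ)..Real.sqrt ((t - a) / a),
          Real.exp (-((μ * Real.sqrt r) ^ 2 / 2) * a * (1 + y ^ 2)) / (1 + y ^ 2)))
    (b r g ε : ℝ) (hb : 0 < b) (hr : 0 < r) (hg : 0 < g) (hε : 0 < ε)
    (hle2 : b / (r * g) * (1 + ε ^ 2) ≤ t) :
    ENNReal.ofReal ((2 / π) *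
        (ε * (Real.exp (-(μ ^ 2 * b / (2 * g) * (1 + ε ^ 2))) / (1 + ε ^ 2)))) ≤
      P {ω | b < r * g * T r ω} := by
  have hrg : 0 < r * g := mul_pos hr hg
  have ha : 0 < b / (r * g) := div_pos hb hrg
  have hle : b / (r * g) ≤ t := by nlinarith [sq_nonneg ε]
  rw [tail_eq μ t ht P T hmeas hcdf b r g hb hr hg hle]
  apply ENNReal.ofReal_le_ofReal
  set c := μ ^ 2 * b / (2 * g) with hc_def
  set a := b / (r * g) with ha_def
  have hc : 0 ≤ c := by positivity
  have hεM : ε ≤ Real.sqrt ((t - a) / a) := by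
    rw [Real.le_sqrt hε.le (div_nonneg (by linarith) ha.le)]
    rw [le_div_iff₀ ha]
    nlinarith
  have hπ := Real.pi_pos
  exact mul_le_mul_of_nonneg_left (Ifun_ge c ε _ hc hε hεM) (by positivity)

set_option maxHeartbeats 2000000 in
theorem stmt_12 (μ t : ℝ) (hμ : μ ≠ 0) (ht : 0 < t)
    (γ : ℝ → ℝ) (hγpos : ∀ r > 0, 0 < γ r)
    (hγ0 : Tendsto γ atTop (nhds 0))
    (hrγ : Tendsto (fun r => r * γ r) atTop atTop)
    {Ω : Type*} [MeasurableSpace Ω] (P : Measure Ω) [IsProbabilityMeasure P]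
    (T : ℝ → Ω → ℝ) (hmeas : ∀ r, Measurable (T r))
    (hrange : ∀ r > 0, ∀ ω, T r ω ∈ Set.Icc 0 t)
    (hcdf : ∀ r > 0, ∀ a ∈ Set.Ioc 0 t,
      P {ω | T r ω ≤ a} = ENNReal.ofReal (1 - (2 / π) *
        ∫ y in (0:ℝ)..Real.sqrt ((t - a) / a),
          Real.exp (-((μ * Real.sqrt r) ^ 2 / 2) * a * (1 + y ^ 2)) / (1 + y ^ 2)))
    (h0 : ∀ r > 0, P {ω | T r ω ≤ 0} = 0) :
    (∀ η : ℝ, IsCompact {b : ℝ | rateJtilde μ b ≤ (η : EReal)}) ∧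
    (∀ C : Set ℝ, IsClosed C →
      limsup (fun r : ℝ =>
          ((γ r : ℝ) : EReal) * eLogProb (P {ω | r * γ r * T r ω ∈ C})) atTop ≤
        -⨅ b ∈ C, rateJtilde μ b) ∧
    (∀ G : Set ℝ, IsOpen G →
      -⨅ b ∈ G, rateJtilde μ b ≤
        liminf (fun r : ℝ =>
          ((γ r : ℝ) : EReal) * eLogProb (P {ω | r * γ r * T r ω ∈ G})) atTop) := by
  have hμ2 : (0:ℝ) < μ ^ 2 := by positivity
  -- generic upper bound by 0
  have hub0 : ∀ S : Set ℝ,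
      limsup (fun r : ℝ => ((γ r : ℝ) : EReal) * eLogProb (P {ω | r * γ r * T r ω ∈ S})) atTop
        ≤ (0 : EReal) := by
    intro S
    apply Filter.limsup_le_of_le (by isBoundedDefault)
    filter_upwards [eventually_gt_atTop (0:ℝ)] with r hr
    rcases eq_or_ne (P {ω | r * γ r * T r ω ∈ S}) 0 with h | h
    · rw [h, eLogProb, if_pos rfl, EReal.coe_mul_bot_of_pos (hγpos r hr)]
      exact bot_le
    · rw [eLogProb, if_neg h, ← EReal.coe_mul]
      apply EReal.coe_nonpos.2
      have h1 : (P {ω | r * γ r * T r ω ∈ S}).toReal ≤ 1 := by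
        have := ENNReal.toReal_mono (by simp) (prob_le_one (μ := P) (s := {ω | r * γ r * T r ω ∈ S}))
        simpa using this
      have h2 : Real.log (P {ω | r * γ r * T r ω ∈ S}).toReal ≤ 0 :=
        Real.log_nonpos ENNReal.toReal_nonneg h1
      nlinarith [(hγpos r hr).le]
  -- key upper bound via tail estimate
  have hkey : ∀ b' : ℝ, 0 < b' → ∀ S : Set ℝ,
      (∀ r, 0 < r → {ω | r * γ r * T r ω ∈ S} ⊆ {ω | b' < r * γ r * T r ω}) →
      limsup (fun r : ℝ => ((γ r : ℝ) : EReal) * eLogProb (P {ω | r * γ r * T r ω ∈ S})) atTop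
        ≤ ((-(μ ^ 2 * b' / 2) : ℝ) : EReal) := by
    intro b' hb' S hsub
    apply Filter.limsup_le_of_le (by isBoundedDefault)
    filter_upwards [eventually_gt_atTop (0:ℝ), hrγ.eventually_ge_atTop (b' / t)] with r hr hge
    have hg := hγpos r hr
    have hrg : 0 < r * γ r := mul_pos hr hg
    have hle : b' / (r * γ r) ≤ t := by
      rw [div_le_iff₀ hrg]
      have h1 := (div_le_iff₀ ht).1 hge
      nlinarith
    have hP : P {ω | r * γ r * T r ω ∈ S} ≤ ENNReal.ofReal (Real.exp (-(μ ^ 2 * b' / (2 * γ r)))) :=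
      (measure_mono (hsub r hr)).trans (tail_le μ t ht P T hmeas hcdf b' r (γ r) hb' hr hg hle)
    rcases eq_or_ne (P {ω | r * γ r * T r ω ∈ S}) 0 with h | h
    · rw [h, eLogProb, if_pos rfl, EReal.coe_mul_bot_of_pos hg]
      exact bot_le
    · rw [eLogProb, if_neg h, ← EReal.coe_mul]
      apply EReal.coe_le_coe_iff.2
      have htR : (P {ω | r * γ r * T r ω ∈ S}).toReal ≤ Real.exp (-(μ ^ 2 * b' / (2 * γ r))) := by
        have := ENNReal.toReal_mono ENNReal.ofReal_ne_top hP
        rwa [ENNReal.toReal_ofReal (Real.exp_pos _).le] at this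
      have hpos : 0 < (P {ω | r * γ r * T r ω ∈ S}).toReal :=
        ENNReal.toReal_pos h (measure_ne_top P _)
      have hlog := (Real.log_le_log hpos htR).trans_eq (Real.log_exp _)
      have heqγ : γ r * (μ ^ 2 * b' / (2 * γ r)) = μ ^ 2 * b' / 2 := by
        field_simp
      nlinarith [mul_le_mul_of_nonneg_left hlog hg.le]
  refine ⟨?_, ?_, ?_⟩
  · -- compact level sets
    intro η
    rcases lt_or_ge η 0 with hη | hη
    · have hset : {b : ℝ | rateJtilde μ b ≤ (η : EReal)} = ∅ := by
        ext b
        simp only [Set.mem_setOf_eq, Set.mem_empty_iff_false, iff_false]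
        rw [rateJtilde]
        split_ifs with hb
        · rw [EReal.coe_le_coe_iff]
          intro h
          nlinarith
        · intro h
          exact absurd (top_le_iff.1 h) (by simp)
      rw [hset]; exact isCompact_empty
    · have hset : {b : ℝ | rateJtilde μ b ≤ (η : EReal)} = Set.Icc 0 (2 * η / μ ^ 2) := by
        ext b
        simp only [Set.mem_setOf_eq, Set.mem_Icc]
        rw [rateJtilde]
        split_ifs with hb
        · rw [EReal.coe_le_coe_iff]
          constructor
          · intro h
            refine ⟨hb, ?_⟩
            rw [le_div_iff₀ hμ2]
            nlinarith
          · intro ⟨_, h⟩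
            rw [le_div_iff₀ hμ2] at h
            nlinarith
        · constructor
          · intro h
            exact absurd (top_le_iff.1 h) (by simp)
          · intro ⟨h, _⟩
            exact absurd h hb
      rw [hset]; exact isCompact_Icc
  · -- upper bound for closed sets
    intro C _hC
    apply EReal.le_of_forall_lt_iff_le.1
    intro z hz
    have hz' : (((-z : ℝ)) : EReal) < ⨅ b ∈ C, rateJtilde μ b := by
      rw [EReal.coe_neg]
      exact EReal.neg_lt_comm.1 hz
    rcases le_or_gt (-z) 0 with hz0 | hz0
    · exact (hub0 C).trans (EReal.coe_nonneg.2 (by linarith))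
    · have hb'pos : 0 < 2 * (-z) / μ ^ 2 := by positivity
      have hsub : ∀ r, 0 < r →
          {ω | r * γ r * T r ω ∈ C} ⊆ {ω | 2 * (-z) / μ ^ 2 < r * γ r * T r ω} := by
        intro r hr ω hω
        have hg := hγpos r hr
        have hZ : 0 ≤ r * γ r * T r ω :=
          mul_nonneg (mul_pos hr hg).le (hrange r hr ω).1
        by_contra hle'
        simp only [Set.mem_setOf_eq, not_lt] at hle'
        have hmul : μ ^ 2 * (2 * (-z) / μ ^ 2) = 2 * (-z) := by field_simp
        have h1 : rateJtilde μ (r * γ r * T r ω) ≤ ((-z : ℝ) : EReal) := by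
          rw [rateJtilde, if_pos hZ]
          apply EReal.coe_le_coe_iff.2
          nlinarith [mul_le_mul_of_nonneg_left hle' hμ2.le]
        have h2 : (⨅ b ∈ C, rateJtilde μ b) ≤ rateJtilde μ (r * γ r * T r ω) :=
          iInf₂_le (r * γ r * T r ω) hω
        exact absurd (h2.trans h1) (not_le.2 hz')
      have hlim := hkey (2 * (-z) / μ ^ 2) hb'pos C hsub
      have heq : -(μ ^ 2 * (2 * (-z) / μ ^ 2) / 2) = z := by field_simp
      rw [heq] at hlim
      exact hlim
  · -- lower bound for open sets
    intro G hG
    rw [EReal.neg_le]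
    apply le_iInf₂
    intro b hb
    rcases lt_or_ge b 0 with hbneg | hbpos
    · rw [rateJtilde, if_neg (not_le.2 hbneg)]
      exact le_top
    rw [rateJtilde, if_pos hbpos, ← EReal.neg_le, ← EReal.coe_neg]
    rcases hbpos.eq_or_lt with heq | hbpos'
    · -- b = 0
      subst heq
      have h00 : -(μ ^ 2 * 0 / 2) = (0:ℝ) := by ring
      rw [h00, EReal.coe_zero]
      obtain ⟨δ, hδ, hball⟩ := Metric.isOpen_iff.1 hG 0 hb
      have hball' : Set.Ioo (-δ) δ ⊆ G := by
        have := Real.ball_eq_Ioo 0 δ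
        rw [this] at hball
        simpa using hball
      have hδ2 : 0 < δ / 2 := by linarith
      have hX : 0 < μ ^ 2 * (δ / 2) / 2 := by positivity
      have hev : ∀ᶠ r in atTop,
          ((γ r * Real.log (1/2) : ℝ) : EReal) ≤
            ((γ r : ℝ) : EReal) * eLogProb (P {ω | r * γ r * T r ω ∈ G}) := by
        filter_upwards [eventually_gt_atTop (0:ℝ), hrγ.eventually_ge_atTop ((δ/2) / t),
          hγ0.eventually_lt_const hX] with r hr hge hγlt
        have hg := hγpos r hr
        have hrg : 0 < r * γ r := mul_pos hr hg
        have hle : (δ/2) / (r * γ r) ≤ t := by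
          rw [div_le_iff₀ hrg]
          have h1 := (div_le_iff₀ ht).1 hge
          nlinarith
        have htail := tail_le μ t ht P T hmeas hcdf (δ/2) r (γ r) hδ2 hr hg hle
        -- exp(-(μ²(δ/2)/(2γ))) ≤ 1/2
        have hclarge : (1:ℝ) ≤ μ ^ 2 * (δ/2) / (2 * γ r) := by
          rw [le_div_iff₀ (by positivity)]
          nlinarith
        have hexp : Real.exp (-(μ ^ 2 * (δ/2) / (2 * γ r))) ≤ 1/2 := by
          have h1 : Real.exp (-(μ ^ 2 * (δ/2) / (2 * γ r))) ≤ Real.exp (-1) :=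
            Real.exp_le_exp.2 (by linarith)
          have h3 : (2:ℝ) ≤ Real.exp 1 := by
            have := Real.add_one_le_exp 1
            linarith
          have h2 : Real.exp (-1) ≤ 1/2 := by
            rw [Real.exp_neg]
            have := inv_anti₀ (by norm_num : (0:ℝ) < 2) h3
            simpa using this
          linarith
        have hPS : P {ω | δ/2 < r * γ r * T r ω} ≤ ENNReal.ofReal (1/2) :=
          htail.trans (ENNReal.ofReal_le_ofReal hexp)
        have hmeasS : MeasurableSet {ω | δ/2 < r * γ r * T r ω} :=
          measurableSet_lt measurable_const ((hmeas r).const_mul (r * γ r))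
        have hsubc : {ω | δ/2 < r * γ r * T r ω}ᶜ ⊆ {ω | r * γ r * T r ω ∈ G} := by
          intro ω hω
          simp only [Set.mem_compl_iff, Set.mem_setOf_eq, not_lt] at hω
          have hZ : 0 ≤ r * γ r * T r ω := mul_nonneg hrg.le (hrange r hr ω).1
          exact hball' ⟨by linarith, by linarith⟩
        have hPG : ENNReal.ofReal (1/2) ≤ P {ω | r * γ r * T r ω ∈ G} := by
          calc ENNReal.ofReal (1/2) = 1 - ENNReal.ofReal (1/2) := by
                rw [show (1:ENNReal) = ENNReal.ofReal 1 by simp,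
                  ← ENNReal.ofReal_sub _ (by norm_num : (0:ℝ) ≤ 1/2)]
                norm_num
            _ ≤ 1 - P {ω | δ/2 < r * γ r * T r ω} := tsub_le_tsub le_rfl hPS
            _ = P {ω | δ/2 < r * γ r * T r ω}ᶜ := (prob_compl_eq_one_sub hmeasS).symm
            _ ≤ P {ω | r * γ r * T r ω ∈ G} := measure_mono hsubc
        have hne : P {ω | r * γ r * T r ω ∈ G} ≠ 0 := by
          intro h
          rw [h] at hPG
          simp at hPG
        rw [eLogProb, if_neg hne, ← EReal.coe_mul]
        apply EReal.coe_le_coe_iff.2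
        have htR : (1/2 : ℝ) ≤ (P {ω | r * γ r * T r ω ∈ G}).toReal := by
          have := ENNReal.toReal_mono (measure_ne_top P _) hPG
          rwa [ENNReal.toReal_ofReal (by norm_num : (0:ℝ) ≤ 1/2)] at this
        have hlog : Real.log (1/2) ≤ Real.log (P {ω | r * γ r * T r ω ∈ G}).toReal :=
          Real.log_le_log (by norm_num) htR
        nlinarith
      have htend : Tendsto (fun r => γ r * Real.log (1/2)) atTop (nhds 0) := by
        have := hγ0.mul_const (Real.log (1/2))
        rwa [zero_mul] at this
      have hliminfeq : liminf (fun r => ((γ r * Real.log (1/2) : ℝ) : EReal)) atTop = (0:EReal) := by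
        have h1 : Tendsto (fun r => ((γ r * Real.log (1/2) : ℝ) : EReal)) atTop (nhds ((0:ℝ) : EReal)) :=
          EReal.tendsto_coe.2 htend
        rw [EReal.coe_zero] at h1
        exact h1.liminf_eq
      calc (0:EReal) = liminf (fun r => ((γ r * Real.log (1/2) : ℝ) : EReal)) atTop := hliminfeq.symm
        _ ≤ liminf (fun r : ℝ => ((γ r : ℝ) : EReal) * eLogProb (P {ω | r * γ r * T r ω ∈ G})) atTop :=
            liminf_le_liminf hev
    · -- b > 0
      by_contra hcon
      push_neg at hcon
      obtain ⟨z, hz1, hz2⟩ := EReal.lt_iff_exists_real_btwn.1 hcon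
      have hz2' : z < -(μ ^ 2 * b / 2) := EReal.coe_lt_coe_iff.1 hz2
      obtain ⟨δ, hδ, hball⟩ := Metric.isOpen_iff.1 hG b hb
      have hball' : Set.Ioo (b - δ) (b + δ) ⊆ G := by rw [← Real.ball_eq_Ioo]; exact hball
      obtain ⟨d, hd, hdδ, hdb⟩ : ∃ d : ℝ, 0 < d ∧ d ≤ δ / 2 ∧ d ≤ b / 2 :=
        ⟨min (δ / 2) (b / 2), lt_min (by linarith) (by linarith), min_le_left _ _, min_le_right _ _⟩
      set b1 := b - d with hb1_def
      set b2 := b + d with hb2_def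
      have hb1 : 0 < b1 := by rw [hb1_def]; linarith
      have hIoc : Set.Ioc b1 b2 ⊆ G := by
        intro x hx
        apply hball'
        rw [hb1_def] at hx
        rw [hb2_def] at hx
        exact ⟨by linarith [hx.1], by linarith [hx.2]⟩
      have hs : 0 < -z - μ ^ 2 * b1 / 2 := by
        have hb1b : b1 < b := by rw [hb1_def]; linarith
        nlinarith
      set s := -z - μ ^ 2 * b1 / 2 with hs_def
      obtain ⟨ε, hε, hεd2, hεs2⟩ : ∃ ε : ℝ, 0 < ε ∧ ε ^ 2 * b1 ≤ d ∧ μ ^ 2 * b1 * ε ^ 2 ≤ s := by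
        have hρ : 0 < min (d / b1) (s / (μ ^ 2 * b1)) :=
          lt_min (div_pos hd hb1) (div_pos hs (by positivity))
        refine ⟨min 1 (Real.sqrt (min (d / b1) (s / (μ ^ 2 * b1)))),
          lt_min one_pos (Real.sqrt_pos.2 hρ), ?_, ?_⟩
        · have h1 : min 1 (Real.sqrt (min (d / b1) (s / (μ ^ 2 * b1)))) ≤
              Real.sqrt (min (d / b1) (s / (μ ^ 2 * b1))) := min_le_right _ _
          have h2 : min 1 (Real.sqrt (min (d / b1) (s / (μ ^ 2 * b1)))) ^ 2 ≤
              min (d / b1) (s / (μ ^ 2 * b1)) := by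
            calc _ ≤ Real.sqrt (min (d / b1) (s / (μ ^ 2 * b1))) ^ 2 := by
                  have h0 : 0 ≤ min 1 (Real.sqrt (min (d / b1) (s / (μ ^ 2 * b1)))) :=
                    le_min zero_le_one (Real.sqrt_nonneg _)
                  nlinarith
              _ = _ := Real.sq_sqrt hρ.le
          have h3 := h2.trans (min_le_left _ _)
          rw [le_div_iff₀ hb1] at h3
          linarith
        · have h1 : min 1 (Real.sqrt (min (d / b1) (s / (μ ^ 2 * b1)))) ≤
              Real.sqrt (min (d / b1) (s / (μ ^ 2 * b1))) := min_le_right _ _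
          have h2 : min 1 (Real.sqrt (min (d / b1) (s / (μ ^ 2 * b1)))) ^ 2 ≤
              min (d / b1) (s / (μ ^ 2 * b1)) := by
            calc _ ≤ Real.sqrt (min (d / b1) (s / (μ ^ 2 * b1))) ^ 2 := by
                  have h0 : 0 ≤ min 1 (Real.sqrt (min (d / b1) (s / (μ ^ 2 * b1)))) :=
                    le_min zero_le_one (Real.sqrt_nonneg _)
                  nlinarith
              _ = _ := Real.sq_sqrt hρ.le
          have h3 := h2.trans (min_le_right _ _)
          rw [le_div_iff₀ (by positivity : (0:ℝ) < μ ^ 2 * b1)] at h3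
          linarith
      have hεd : b1 * (1 + ε ^ 2) ≤ b := by
        rw [hb1_def]
        rw [hb1_def] at hεd2
        nlinarith
      have hzA : z < -(μ ^ 2 * b1 / 2 * (1 + ε ^ 2)) := by
        rw [hs_def] at hεs2
        nlinarith
      set d2 := b2 - b1 * (1 + ε ^ 2) with hd2_def
      have hd2 : 0 < d2 := by
        rw [hd2_def, hb2_def]
        nlinarith
      set K0 := ε / (π * (1 + ε ^ 2)) with hK0_def
      have hπ := Real.pi_pos
      have hK0 : 0 < K0 := by rw [hK0_def]; positivity
      set K1 := (μ ^ 2 * d2 / 2) / (1 + |Real.log K0|) with hK1_def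
      have hK1 : 0 < K1 := by
        rw [hK1_def]
        positivity
      have hev : ∀ᶠ r in atTop,
          ((γ r * Real.log K0 - μ ^ 2 * b1 / 2 * (1 + ε ^ 2) : ℝ) : EReal) ≤
            ((γ r : ℝ) : EReal) * eLogProb (P {ω | r * γ r * T r ω ∈ G}) := by
        filter_upwards [eventually_gt_atTop (0:ℝ),
          hrγ.eventually_ge_atTop (b1 * (1 + ε ^ 2) / t),
          hrγ.eventually_ge_atTop (b2 / t),
          hγ0.eventually_lt_const hK1] with r hr hge1 hge2 hγlt
        have hg := hγpos r hr
        have hrg : 0 < r * γ r := mul_pos hr hg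
        have hle1 : b1 / (r * γ r) * (1 + ε ^ 2) ≤ t := by
          rw [div_mul_eq_mul_div, div_le_iff₀ hrg]
          have h1 := (div_le_iff₀ ht).1 hge1
          nlinarith
        have hle2 : b2 / (r * γ r) ≤ t := by
          rw [div_le_iff₀ hrg]
          have h1 := (div_le_iff₀ ht).1 hge2
          nlinarith
        have hlow := tail_ge μ t ht P T hmeas hcdf b1 r (γ r) ε hb1 hr hg hε hle1
        have hup := tail_le μ t ht P T hmeas hcdf b2 r (γ r) (by rw [hb2_def]; linarith) hr hg hle2
        set E : ℝ := Real.exp (-(μ ^ 2 * b1 / (2 * γ r) * (1 + ε ^ 2))) with hE_def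
        have hE : 0 < E := Real.exp_pos _
        have hLo : (2 / π) * (ε * (E / (1 + ε ^ 2))) = 2 * (K0 * E) := by
          rw [hK0_def]
          field_simp
          try ring
        -- exponential comparison
        have hhalf : Real.exp (-(μ ^ 2 * b2 / (2 * γ r))) ≤ K0 * E := by
          have hsplit : -(μ ^ 2 * b2 / (2 * γ r)) =
              -(μ ^ 2 * b1 / (2 * γ r) * (1 + ε ^ 2)) + -(μ ^ 2 * d2 / (2 * γ r)) := by
            rw [hd2_def]
            field_simp
            try ring
          rw [hsplit, Real.exp_add, hE_def]
          rw [mul_comm (Real.exp _) _]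
          apply mul_le_mul_of_nonneg_right _ (Real.exp_pos _).le
          have hKγ : γ r * (1 + |Real.log K0|) ≤ μ ^ 2 * d2 / 2 := by
            rw [hK1_def] at hγlt
            rw [lt_div_iff₀ (by positivity : (0:ℝ) < 1 + |Real.log K0|)] at hγlt
            linarith
          have hexp_le : -(μ ^ 2 * d2 / (2 * γ r)) ≤ Real.log K0 := by
            rw [neg_le]
            rw [le_div_iff₀ (by positivity : (0:ℝ) < 2 * γ r)]
            have h1 : -Real.log K0 ≤ 1 + |Real.log K0| := by
              have := abs_nonneg (Real.log K0)
              have := neg_abs_le (Real.log K0)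
              linarith
            nlinarith
          calc Real.exp (-(μ ^ 2 * d2 / (2 * γ r))) ≤ Real.exp (Real.log K0) :=
                Real.exp_le_exp.2 hexp_le
            _ = K0 := Real.exp_log hK0
        -- measure chain
        have hmeas2 : MeasurableSet {ω | b2 < r * γ r * T r ω} :=
          measurableSet_lt measurable_const ((hmeas r).const_mul (r * γ r))
        have hsub1 : {ω | b1 < r * γ r * T r ω} ⊆
            {ω | b1 < r * γ r * T r ω ∧ r * γ r * T r ω ≤ b2} ∪ {ω | b2 < r * γ r * T r ω} := by
          intro ω hω
          rcases le_or_gt (r * γ r * T r ω) b2 with h | h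
          · exact Or.inl ⟨hω, h⟩
          · exact Or.inr h
        have hP2 : P {ω | b1 < r * γ r * T r ω} ≤
            P {ω | b1 < r * γ r * T r ω ∧ r * γ r * T r ω ≤ b2} + P {ω | b2 < r * γ r * T r ω} :=
          (measure_mono hsub1).trans (measure_union_le _ _)
        have hP3 : P {ω | b1 < r * γ r * T r ω} - P {ω | b2 < r * γ r * T r ω} ≤
            P {ω | b1 < r * γ r * T r ω ∧ r * γ r * T r ω ≤ b2} :=
          tsub_le_iff_right.2 hP2
        have hPG2 : P {ω | b1 < r * γ r * T r ω ∧ r * γ r * T r ω ≤ b2} ≤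
            P {ω | r * γ r * T r ω ∈ G} :=
          measure_mono (fun ω hω => hIoc ⟨hω.1, hω.2⟩)
        have hlow' : ENNReal.ofReal (2 * (K0 * E)) ≤ P {ω | b1 < r * γ r * T r ω} := by
          rw [← hLo]
          exact hlow
        have hup' : P {ω | b2 < r * γ r * T r ω} ≤ ENNReal.ofReal (K0 * E) :=
          hup.trans (ENNReal.ofReal_le_ofReal hhalf)
        have hfinal : ENNReal.ofReal (K0 * E) ≤ P {ω | r * γ r * T r ω ∈ G} := by
          calc ENNReal.ofReal (K0 * E)
              = ENNReal.ofReal (2 * (K0 * E)) - ENNReal.ofReal (K0 * E) := by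
                rw [← ENNReal.ofReal_sub _ (by positivity : (0:ℝ) ≤ K0 * E)]
                congr 1
                ring
            _ ≤ P {ω | b1 < r * γ r * T r ω} - P {ω | b2 < r * γ r * T r ω} :=
                tsub_le_tsub hlow' hup'
            _ ≤ P {ω | b1 < r * γ r * T r ω ∧ r * γ r * T r ω ≤ b2} := hP3
            _ ≤ P {ω | r * γ r * T r ω ∈ G} := hPG2
        have hne : P {ω | r * γ r * T r ω ∈ G} ≠ 0 := by
          intro h
          rw [h] at hfinal
          have := ENNReal.ofReal_pos.2 (by positivity : (0:ℝ) < K0 * E)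
          exact absurd (le_antisymm (le_of_le_of_eq hfinal rfl) (by simp)) (by
            intro hh
            rw [hh] at this
            exact lt_irrefl _ this)
        rw [eLogProb, if_neg hne, ← EReal.coe_mul]
        apply EReal.coe_le_coe_iff.2
        have htR : K0 * E ≤ (P {ω | r * γ r * T r ω ∈ G}).toReal := by
          have := ENNReal.toReal_mono (measure_ne_top P _) hfinal
          rwa [ENNReal.toReal_ofReal (by positivity : (0:ℝ) ≤ K0 * E)] at this
        have hlogKE : Real.log (K0 * E) = Real.log K0 - μ ^ 2 * b1 / (2 * γ r) * (1 + ε ^ 2) := by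
          rw [Real.log_mul hK0.ne' hE.ne', hE_def, Real.log_exp]
          ring
        have hlogP : Real.log K0 - μ ^ 2 * b1 / (2 * γ r) * (1 + ε ^ 2) ≤
            Real.log (P {ω | r * γ r * T r ω ∈ G}).toReal := by
          rw [← hlogKE]
          exact Real.log_le_log (by positivity) htR
        have heqγ : γ r * (μ ^ 2 * b1 / (2 * γ r) * (1 + ε ^ 2)) =
            μ ^ 2 * b1 / 2 * (1 + ε ^ 2) := by
          field_simp
        nlinarith [mul_le_mul_of_nonneg_left hlogP hg.le]
      -- liminf conclusion
      have htend : Tendsto (fun r => γ r * Real.log K0 - μ ^ 2 * b1 / 2 * (1 + ε ^ 2)) atTop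
          (nhds (-(μ ^ 2 * b1 / 2 * (1 + ε ^ 2)))) := by
        have h1 := (hγ0.mul_const (Real.log K0)).sub_const (μ ^ 2 * b1 / 2 * (1 + ε ^ 2))
        rwa [zero_mul, zero_sub] at h1
      have hliminf : ((-(μ ^ 2 * b1 / 2 * (1 + ε ^ 2)) : ℝ) : EReal) ≤
          liminf (fun r : ℝ => ((γ r : ℝ) : EReal) * eLogProb (P {ω | r * γ r * T r ω ∈ G})) atTop := by
        have h1 := (EReal.tendsto_coe.2 htend).liminf_eq
        rw [← h1]
        exact liminf_le_liminf hev
      have : ((z:ℝ) : EReal) ≤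
          liminf (fun r : ℝ => ((γ r : ℝ) : EReal) * eLogProb (P {ω | r * γ r * T r ω ∈ G})) atTop :=
        le_trans (EReal.coe_le_coe_iff.2 hzA.le) hliminf
      exact absurd this (not_le.2 hz1)
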